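/- Let g ≥ 12 be a natural number, set k = ⌈(g/2)^{2/3}⌉ + 1, let n ≥ 1, and let p_1 ≤ p_2 ≤ … ≤ p_n be positive reals. Let τ_1, …, τ_n be independent real random variables where τ_j has the Gamma distribution with shape k and rate g/p_j. Then Σ_{j=1}^n p_j + Σ_{1≤i<j≤n} E[ p_i + min(τ_i, τ_j) + (p_j − p_i)·𝟙(τ_j < τ_i) ] ≤ (1 + (12/g)^{1/3}) · Σ_{i=1}^n (n − i + 1)·p_i. -/

import Mathlib

section Aux
open MeasureTheory ProbabilityTheory Real Set

lemma gamma_measure_neg (a r : ℝ) : (gammaMeasure a r) (Iio 0) = 0 := by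
  rw [gammaMeasure, withDensity_apply _ measurableSet_Iio]
  exact ProbabilityTheory.lintegral_gammaPDF_of_nonpos le_rfl

lemma gamma_ae_nonneg (a r : ℝ) : ∀ᵐ x ∂(gammaMeasure a r), 0 ≤ x := by
  rw [ae_iff]
  have : {x : ℝ | ¬ 0 ≤ x} = Iio 0 := by ext x; simp
  rw [this]; exact gamma_measure_neg a r

/-- Core computation of lintegrals against the gamma measure. -/
lemma gamma_lintegral_core {a r : ℝ} (ha : 0 < a) (hr : 0 < r) (f : ℝ → ℝ) (hf : Measurable f)
    {b s C : ℝ} (hb : 0 < b) (hs : 0 < s) (hC : 0 ≤ C)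
    (heq : ∀ x ∈ Ioi (0:ℝ), gammaPDFReal a r x * f x = C * (x ^ (b-1) * exp (-(s * x)))) :
    ∫⁻ x, ENNReal.ofReal (f x) ∂(gammaMeasure a r)
      = ENNReal.ofReal (C * ((1/s) ^ b * Real.Gamma b)) := by
  have hpdfm : Measurable (gammaPDF a r) :=
    (ProbabilityTheory.measurable_gammaPDFReal a r).ennreal_ofReal
  rw [gammaMeasure, lintegral_withDensity_eq_lintegral_mul _ hpdfm hf.ennreal_ofReal]
  have h1 : ∀ x : ℝ, (gammaPDF a r * fun x => ENNReal.ofReal (f x)) x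
      = ENNReal.ofReal (gammaPDFReal a r x * f x) := by
    intro x
    simp only [Pi.mul_apply, gammaPDF]
    rw [ENNReal.ofReal_mul (gammaPDFReal_nonneg ha hr x)]
  simp_rw [h1]
  have hIoi : ∫⁻ x in Ioi (0:ℝ), ENNReal.ofReal (gammaPDFReal a r x * f x)
      = ENNReal.ofReal (C * ((1/s) ^ b * Real.Gamma b)) := by
    rw [setLIntegral_congr_fun measurableSet_Ioi
      (fun x hx => by rw [heq x hx])]
    rw [← ofReal_integral_eq_lintegral_ofReal]
    · rw [integral_const_mul, integral_rpow_mul_exp_neg_mul_Ioi hb hs]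
    · exact (((integrableOn_rpow_mul_exp_neg_mul_rpow (by linarith : (-1:ℝ) < b - 1)
        zero_lt_one hs).congr_fun (fun x hx => by
          rw [Real.rpow_one, neg_mul]) measurableSet_Ioi).const_mul C)
    · refine (ae_restrict_iff' measurableSet_Ioi).mpr (ae_of_all _ fun x hx => ?_)
      have : (0:ℝ) < x := hx
      positivity
  rw [← lintegral_add_compl _ measurableSet_Ici (μ := volume), compl_Ici]
  have hneg : ∫⁻ x in Iio (0:ℝ), ENNReal.ofReal (gammaPDFReal a r x * f x) = 0 := by
    rw [setLIntegral_congr_fun measurableSet_Iio (fun x (hx : x < 0) => ?_),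
      lintegral_zero]
    unfold ProbabilityTheory.gammaPDFReal
    rw [if_neg (by linarith), zero_mul, ENNReal.ofReal_zero]
  rw [hneg, add_zero, ← setLIntegral_congr (Ioi_ae_eq_Ici (a := (0:ℝ))), hIoi]

lemma gamma_integral_eq {a r : ℝ} (ha : 0 < a) (hr : 0 < r) (f : ℝ → ℝ) (hf : Measurable f)
    (hfpos : ∀ x : ℝ, 0 ≤ x → 0 ≤ f x)
    {b s C : ℝ} (hb : 0 < b) (hs : 0 < s) (hC : 0 ≤ C)
    (heq : ∀ x ∈ Ioi (0:ℝ), gammaPDFReal a r x * f x = C * (x ^ (b-1) * exp (-(s * x)))) :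
    Integrable f (gammaMeasure a r) ∧
      ∫ x, f x ∂(gammaMeasure a r) = C * ((1/s) ^ b * Real.Gamma b) := by
  have hae : 0 ≤ᵐ[gammaMeasure a r] f :=
    (gamma_ae_nonneg a r).mono (fun x hx => hfpos x hx)
  have hcore := gamma_lintegral_core ha hr f hf hb hs hC heq
  have hval : 0 ≤ C * ((1/s) ^ b * Real.Gamma b) := by
    have := Real.Gamma_nonneg_of_nonneg hb.le
    positivity
  have hint : Integrable f (gammaMeasure a r) := by
    refine ⟨hf.aestronglyMeasurable, ?_⟩
    rw [hasFiniteIntegral_iff_norm]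
    have : ∫⁻ x, ENNReal.ofReal ‖f x‖ ∂(gammaMeasure a r)
        = ∫⁻ x, ENNReal.ofReal (f x) ∂(gammaMeasure a r) := by
      refine lintegral_congr_ae (hae.mono fun x hx => ?_)
      show ENNReal.ofReal ‖f x‖ = ENNReal.ofReal (f x)
      rw [Real.norm_eq_abs, abs_of_nonneg hx]
    rw [this, hcore]
    exact ENNReal.ofReal_lt_top
  refine ⟨hint, ?_⟩
  rw [integral_eq_lintegral_of_nonneg_ae hae hf.aestronglyMeasurable, hcore,
    ENNReal.toReal_ofReal hval]

lemma gamma_integral_id {a r : ℝ} (ha : 0 < a) (hr : 0 < r) :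
    Integrable (fun x : ℝ => x) (gammaMeasure a r) ∧
      ∫ x, x ∂(gammaMeasure a r) = a / r := by
  have h := gamma_integral_eq ha hr (fun x => x) measurable_id (fun x hx => hx)
    (b := a + 1) (s := r) (C := r ^ a / Real.Gamma a)
    (by linarith) hr (by have := Real.Gamma_nonneg_of_nonneg ha.le; positivity)
    (fun x hx => by
      have hx' : (0:ℝ) < x := hx
      unfold ProbabilityTheory.gammaPDFReal
      rw [if_pos hx'.le]
      rw [add_sub_cancel_right]
      have hxa : x ^ (a-1) * x = x ^ a := by
        rw [← Real.rpow_add_one hx'.ne' (a-1), sub_add_cancel]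
      rw [← hxa]; ring)
  refine ⟨h.1, ?_⟩
  rw [h.2, Real.Gamma_add_one ha.ne']
  have h1 : (1/r) ^ (a+1) = (1/r) ^ a * (1/r) := by
    rw [Real.rpow_add (by positivity), Real.rpow_one]
  have h2 : r ^ a * (1/r) ^ a = 1 := by
    rw [← Real.mul_rpow hr.le (by positivity), mul_one_div, div_self hr.ne', Real.one_rpow]
  have h3 : Real.Gamma a ≠ 0 := (Real.Gamma_pos_of_pos ha).ne'
  rw [h1]
  calc r ^ a / Real.Gamma a * ((1/r) ^ a * (1/r) * (a * Real.Gamma a))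
      = (r ^ a * (1/r) ^ a) * (Real.Gamma a / Real.Gamma a) * (a * (1/r)) := by ring
    _ = a / r := by rw [h2, div_self h3]; ring

lemma gamma_integral_exp {a r θ : ℝ} (ha : 0 < a) (hr : 0 < r) (hθ : θ < r) :
    Integrable (fun x : ℝ => exp (θ * x)) (gammaMeasure a r) ∧
      ∫ x, exp (θ * x) ∂(gammaMeasure a r) = (r / (r - θ)) ^ a := by
  have hs : 0 < r - θ := by linarith
  have hΓ : (0:ℝ) < Real.Gamma a := Real.Gamma_pos_of_pos ha
  have h := gamma_integral_eq ha hr (fun x => exp (θ * x))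
    (by fun_prop) (fun x _ => (exp_pos _).le)
    (b := a) (s := r - θ) (C := r ^ a / Real.Gamma a)
    ha hs (by positivity)
    (fun x hx => by
      have hx' : (0:ℝ) < x := hx
      unfold ProbabilityTheory.gammaPDFReal
      rw [if_pos hx'.le]
      show r ^ a / Real.Gamma a * x ^ (a - 1) * exp (-(r * x)) * exp (θ * x)
          = r ^ a / Real.Gamma a * (x ^ (a - 1) * exp (-((r - θ) * x)))
      rw [mul_assoc, mul_assoc, ← Real.exp_add]
      ring_nf)
  refine ⟨h.1, ?_⟩
  rw [h.2]
  rw [mul_comm ((1/(r-θ)) ^ a) (Real.Gamma a), ← mul_assoc, div_mul_cancel₀ _ hΓ.ne',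
    ← Real.mul_rpow hr.le (by positivity), mul_one_div]


lemma amgm_core (m : ℕ) (A C c u : ℝ) (hA : 0 ≤ A) (hC : 0 ≤ C) (h0 : 0 ≤ u) (h1 : u ≤ 1)
    (hc : A*u + ((m:ℝ)+1)*(1+u) + (m:ℝ)*(C*(1-u)) = (2*(m:ℝ)+2)*c) :
    (A*u) * (1+u)^(m+1) * (C*(1-u))^m ≤ c^(2*m+2) := by
  have hN : (0:ℝ) < 2*(m:ℝ)+2 := by positivity
  have hq1 : 0 ≤ A*u := mul_nonneg hA h0
  have hq2 : (0:ℝ) ≤ 1+u := by linarith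
  have hq3 : 0 ≤ C*(1-u) := mul_nonneg hC (by linarith)
  have hw : (1/(2*(m:ℝ)+2)) + ((m:ℝ)+1)/(2*(m:ℝ)+2) + (m:ℝ)/(2*(m:ℝ)+2) = 1 := by
    field_simp; ring
  have hgm := Real.geom_mean_le_arith_mean3_weighted (by positivity) (by positivity)
    (by positivity) hq1 hq2 hq3 hw
  have hrhs : (1/(2*(m:ℝ)+2))*(A*u) + (((m:ℝ)+1)/(2*(m:ℝ)+2))*(1+u)
      + ((m:ℝ)/(2*(m:ℝ)+2))*(C*(1-u)) = c := by
    field_simp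
    linarith [hc]
  rw [hrhs] at hgm
  have hgm0 : (0:ℝ) ≤ (A*u) ^ (1/(2*(m:ℝ)+2)) * (1+u) ^ (((m:ℝ)+1)/(2*(m:ℝ)+2))
      * (C*(1-u)) ^ ((m:ℝ)/(2*(m:ℝ)+2)) := by positivity
  have key := pow_le_pow_left₀ hgm0 hgm (2*m+2)
  have hNcast : ((2*m+2 : ℕ):ℝ) = 2*(m:ℝ)+2 := by push_cast; ring
  have expand : ((A*u) ^ (1/(2*(m:ℝ)+2)) * (1+u) ^ (((m:ℝ)+1)/(2*(m:ℝ)+2))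
      * (C*(1-u)) ^ ((m:ℝ)/(2*(m:ℝ)+2)))^(2*m+2)
      = (A*u) * (1+u)^(m+1) * (C*(1-u))^m := by
    rw [mul_pow, mul_pow, ← Real.rpow_natCast ((A*u) ^ (1/(2*(m:ℝ)+2))) (2*m+2),
      ← Real.rpow_natCast ((1+u) ^ (((m:ℝ)+1)/(2*(m:ℝ)+2))) (2*m+2),
      ← Real.rpow_natCast ((C*(1-u)) ^ ((m:ℝ)/(2*(m:ℝ)+2))) (2*m+2),
      ← Real.rpow_mul hq1, ← Real.rpow_mul hq2, ← Real.rpow_mul hq3, hNcast]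
    rw [show 1/(2*(m:ℝ)+2) * (2*(m:ℝ)+2) = 1 by field_simp]
    rw [show ((m:ℝ)+1)/(2*(m:ℝ)+2) * (2*(m:ℝ)+2) = (m:ℝ)+1 by field_simp]
    rw [show (m:ℝ)/(2*(m:ℝ)+2) * (2*(m:ℝ)+2) = (m:ℝ) by field_simp]
    rw [Real.rpow_one, show ((m:ℝ)+1) = ((m+1 : ℕ):ℝ) by push_cast; ring,
      Real.rpow_natCast, Real.rpow_natCast]
  rw [expand] at key
  exact key

lemma poly4 (u : ℝ) (h0 : 0 ≤ u) (h1 : u ≤ 1) : 2*u*(1+u)^5*(1-u)^4 ≤ 7/12 := by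
  have h := amgm_core 4 (37/10) (87/40) (137/100) u (by norm_num) (by norm_num) h0 h1
    (by push_cast; ring)
  have expand : ((37:ℝ)/10*u) * (1+u)^(4+1) * ((87/40)*(1-u))^4
      = (37/10)*(87/40)^4 * (u*(1+u)^5*(1-u)^4) := by ring
  rw [expand] at h
  nlinarith [h]

lemma poly5 (u : ℝ) (h0 : 0 ≤ u) (h1 : u ≤ 1) : 2*u*(1+u)^6*(1-u)^5 ≤ 1/2 := by
  have h := amgm_core 5 4 2 (4/3) u (by norm_num) (by norm_num) h0 h1 (by push_cast; ring)
  have expand : ((4:ℝ)*u) * (1+u)^(5+1) * (2*(1-u))^5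
      = 4*2^5 * (u*(1+u)^6*(1-u)^5) := by ring
  rw [expand] at h
  nlinarith [h]

lemma poly6 (u : ℝ) (h0 : 0 ≤ u) (h1 : u ≤ 1) : 2*u*(1+u)^7*(1-u)^6 ≤ 9/20 := by
  have h := amgm_core 6 (107/25) (47/25) (457/350) u (by norm_num) (by norm_num) h0 h1
    (by push_cast; ring)
  have expand : ((107:ℝ)/25*u) * (1+u)^(6+1) * ((47/25)*(1-u))^6
      = (107/25)*(47/25)^6 * (u*(1+u)^7*(1-u)^6) := by ring
  rw [expand] at h
  nlinarith [h]


lemma rpow_third_le {z c : ℝ} (hc : 0 ≤ c) (hz : 0 ≤ z) (h : z ≤ c^3) :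
    z ^ ((1:ℝ)/3) ≤ c := by
  have h3 : ((c^3 : ℝ)) ^ ((1:ℝ)/3) = c := by
    rw [← Real.rpow_natCast c 3, ← Real.rpow_mul hc]
    norm_num
  calc z ^ ((1:ℝ)/3) ≤ (c^3) ^ ((1:ℝ)/3) :=
        Real.rpow_le_rpow hz h (by norm_num)
    _ = c := h3

lemma le_rpow_third {z c : ℝ} (hc : 0 ≤ c) (h : c^3 ≤ z) :
    c ≤ z ^ ((1:ℝ)/3) := by
  have h3 : ((c^3 : ℝ)) ^ ((1:ℝ)/3) = c := by
    rw [← Real.rpow_natCast c 3, ← Real.rpow_mul hc]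
    norm_num
  calc c = (c^3) ^ ((1:ℝ)/3) := h3.symm
    _ ≤ z ^ ((1:ℝ)/3) := Real.rpow_le_rpow (by positivity) h (by norm_num)

lemma lt_rpow_third {z c : ℝ} (hc : 0 ≤ c) (h : c^3 < z) :
    c < z ^ ((1:ℝ)/3) := by
  have h3 : ((c^3 : ℝ)) ^ ((1:ℝ)/3) = c := by
    rw [← Real.rpow_natCast c 3, ← Real.rpow_mul hc]
    norm_num
  calc c = (c^3) ^ ((1:ℝ)/3) := h3.symm
    _ < z ^ ((1:ℝ)/3) := Real.rpow_lt_rpow (by positivity) h (by norm_num)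

lemma two_thirds_eq {q : ℝ} (hq : 0 ≤ q) : q ^ ((2:ℝ)/3) = (q^2) ^ ((1:ℝ)/3) := by
  rw [← Real.rpow_natCast q 2, ← Real.rpow_mul hq]
  norm_num

lemma ceil_23 (G c : ℕ) (hc : c ≠ 0) (h1 : ((c:ℝ)-1)^3 < (((G:ℕ):ℝ)/2)^2)
    (h2 : (((G:ℕ):ℝ)/2)^2 ≤ (c:ℝ)^3) :
    ⌈(((G:ℕ):ℝ)/2) ^ ((2:ℝ)/3)⌉₊ = c := by
  have hq : (0:ℝ) ≤ ((G:ℕ):ℝ)/2 := by positivity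
  rw [two_thirds_eq hq]
  rw [Nat.ceil_eq_iff hc]
  constructor
  · have hc1 : (1:ℕ) ≤ c := Nat.one_le_iff_ne_zero.mpr hc
    rw [Nat.cast_sub hc1, Nat.cast_one]
    have hc1' : (1:ℝ) ≤ (c:ℝ) := by exact_mod_cast hc1
    exact lt_rpow_third (by linarith) h1
  · exact rpow_third_le (by positivity) (by positivity) h2


lemma yexp_num (y : ℝ) (hy : 0 ≤ y) : y * exp (-y) ≤ 36788/100000 := by
  have h1 : y ≤ exp (y - 1) := by have := Real.add_one_le_exp (y-1); linarith
  have h2 : y * exp (-y) ≤ exp (y-1) * exp (-y) :=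
    mul_le_mul_of_nonneg_right h1 (exp_pos _).le
  have h3 : exp (y-1) * exp (-y) = exp (-1) := by rw [← Real.exp_add]; ring_nf
  have h4 : exp (-1) ≤ 36788/100000 := by
    rw [Real.exp_neg]
    have := Real.exp_one_gt_d9
    rw [inv_le_comm₀ (by positivity) (by norm_num)]
    linarith
  linarith [h2, h3 ▸ h2]

lemma texp_bound1 (t : ℝ) (ht : 0 ≤ t) :
    2*t*exp (-(6299/10000*t^2)) ≤ 1081/1000 := by
  have hy := yexp_num (2*(6299/10000)*t^2) (by positivity)
  have hE2 : exp (-(6299/10000*t^2)) * exp (-(6299/10000*t^2))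
      = exp (-(2*(6299/10000)*t^2)) := by rw [← Real.exp_add]; ring_nf
  have key : (2*t*exp (-(6299/10000*t^2)))^2 ≤ (20000/6299) * (36788/100000) := by
    have e1 : (2*t*exp (-(6299/10000*t^2)))^2
        = (20000/6299) * ((2*(6299/10000)*t^2) * exp (-(2*(6299/10000)*t^2))) := by
      rw [← hE2]; ring
    rw [e1]
    have h0 : (0:ℝ) < 20000/6299 := by norm_num
    nlinarith [hy]
  nlinarith [key, mul_nonneg (mul_nonneg (by norm_num : (0:ℝ) ≤ 2) ht) (exp_pos (-(6299/10000*t^2))).le]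

lemma texp_bound2 (t : ℝ) (ht : 0 ≤ t) :
    2*t^2*exp (-(6299/10000*t^2)) ≤ 11681/10000 := by
  have hy := yexp_num ((6299/10000)*t^2) (by positivity)
  have e1 : 2*t^2*exp (-(6299/10000*t^2))
      = (20000/6299) * (((6299/10000)*t^2) * exp (-((6299/10000)*t^2))) := by
    ring_nf
  rw [e1]
  nlinarith [hy]



set_option maxHeartbeats 1000000 in
lemma exp_case (g : ℕ) (hg : 33 ≤ g) (m : ℕ)
    (hmy : ((g:ℝ)/2) ^ ((2:ℝ)/3) ≤ (m:ℝ))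
    (hky : ((m:ℝ)+1) ≤ ((g:ℝ)/2) ^ ((2:ℝ)/3) + 2)
    (u : ℝ) (h0 : 0 ≤ u) (h1 : u ≤ 1) :
    2*u*(1+u)*(1-u^2)^m + ((m:ℝ)+1)/g ≤ (12/(g:ℝ)) ^ ((1:ℝ)/3) := by
  have hgR : (33:ℝ) ≤ (g:ℝ) := by exact_mod_cast hg
  have hgpos : (0:ℝ) < g := by linarith
  set x : ℝ := (g:ℝ) ^ ((1:ℝ)/3) with hxdef
  have hxpos : 0 < x := Real.rpow_pos_of_pos hgpos _
  have hx3 : x^3 = (g:ℝ) := by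
    rw [hxdef, ← Real.rpow_natCast ((g:ℝ) ^ ((1:ℝ)/3)) 3, ← Real.rpow_mul hgpos.le]
    norm_num
  have hxge : (3207/1000 : ℝ) ≤ x := by
    apply le_rpow_third (by norm_num)
    nlinarith
  have hx2 : x^2 = (g:ℝ) ^ ((2:ℝ)/3) := by
    rw [hxdef, ← Real.rpow_natCast ((g:ℝ) ^ ((1:ℝ)/3)) 2, ← Real.rpow_mul hgpos.le]
    norm_num
  -- 2^(2/3) bounds
  have h2u : (2:ℝ) ^ ((2:ℝ)/3) ≤ 15875/10000 := by
    have : (2:ℝ) ^ ((2:ℝ)/3) = (4:ℝ) ^ ((1:ℝ)/3) := by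
      rw [show ((2:ℝ)/3) = (2:ℝ) * (1/3) by norm_num, Real.rpow_mul (by norm_num)]
      norm_num
    rw [this]
    exact rpow_third_le (by norm_num) (by norm_num) (by norm_num)
  have h2l : (15873/10000 : ℝ) ≤ (2:ℝ) ^ ((2:ℝ)/3) := by
    have : (2:ℝ) ^ ((2:ℝ)/3) = (4:ℝ) ^ ((1:ℝ)/3) := by
      rw [show ((2:ℝ)/3) = (2:ℝ) * (1/3) by norm_num, Real.rpow_mul (by norm_num)]
      norm_num
    rw [this]
    exact le_rpow_third (by norm_num) (by norm_num)
  have h2pos : (0:ℝ) < (2:ℝ) ^ ((2:ℝ)/3) := Real.rpow_pos_of_pos (by norm_num) _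
  have hy_eq : ((g:ℝ)/2) ^ ((2:ℝ)/3) = x^2 / (2:ℝ) ^ ((2:ℝ)/3) := by
    rw [Real.div_rpow hgpos.le (by norm_num), hx2]
  -- m lower bound
  have hm_low : (6299/10000 : ℝ) * x^2 ≤ (m:ℝ) := by
    have h1' : x^2 / (15875/10000 : ℝ) ≤ x^2 / (2:ℝ) ^ ((2:ℝ)/3) := by
      apply div_le_div_of_nonneg_left (by positivity) h2pos h2u
    have h2' : (6299/10000 : ℝ) * x^2 ≤ x^2 / (15875/10000 : ℝ) := by
      rw [div_eq_mul_inv]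
      nlinarith [sq_nonneg x]
    calc (6299/10000 : ℝ) * x^2 ≤ x^2 / (15875/10000 : ℝ) := h2'
      _ ≤ x^2 / (2:ℝ) ^ ((2:ℝ)/3) := h1'
      _ = ((g:ℝ)/2) ^ ((2:ℝ)/3) := hy_eq.symm
      _ ≤ (m:ℝ) := hmy
  -- k upper bound
  have hk_up : ((m:ℝ)+1)/(g:ℝ) ≤ (6301/10000)/x + 2/x^3 := by
    have hy_up : ((g:ℝ)/2) ^ ((2:ℝ)/3) ≤ (6301/10000) * x^2 := by
      rw [hy_eq]
      rw [div_le_iff₀ h2pos]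
      nlinarith [sq_nonneg x, h2l]
    have hnum : ((m:ℝ)+1) ≤ (6301/10000) * x^2 + 2 := by linarith
    rw [← hx3]
    rw [div_le_iff₀ (by positivity)]
    have e1 : ((6301/10000)/x + 2/x^3) * x^3 = (6301/10000) * x^2 + 2 := by
      field_simp
    rw [e1]
    exact hnum
  -- rhs lower bound
  have hrhs : (22894/10000 : ℝ)/x ≤ (12/(g:ℝ)) ^ ((1:ℝ)/3) := by
    have : (12/(g:ℝ)) ^ ((1:ℝ)/3) = (12:ℝ) ^ ((1:ℝ)/3) / x := by
      rw [hxdef, Real.div_rpow (by norm_num) hgpos.le]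
    rw [this]
    gcongr
    exact le_rpow_third (by norm_num) (by norm_num)
  -- main chain
  have h1u : (0:ℝ) ≤ 1 - u^2 := by nlinarith
  have hbase : 1 - u^2 ≤ exp (-(u^2)) := by
    have := Real.add_one_le_exp (-(u^2)); linarith
  have hpow : (1-u^2)^m ≤ exp (-((m:ℝ)*u^2)) := by
    calc (1-u^2)^m ≤ (exp (-(u^2)))^m := pow_le_pow_left₀ h1u hbase m
      _ = exp (-((m:ℝ)*u^2)) := by
          rw [← Real.exp_nat_mul]; ring_nf
  have hexpmono : exp (-((m:ℝ)*u^2)) ≤ exp (-(6299/10000*(x*u)^2)) := by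
    apply Real.exp_le_exp.mpr
    have := mul_le_mul_of_nonneg_right hm_low (sq_nonneg u)
    nlinarith [this]
  set E : ℝ := exp (-(6299/10000*(x*u)^2)) with hEdef
  have hE0 : 0 < E := exp_pos _
  have hmain : 2*u*(1+u)*(1-u^2)^m ≤ 2*u*E + 2*u^2*E := by
    have step1 : 2*u*(1+u)*(1-u^2)^m ≤ 2*u*(1+u)*exp (-((m:ℝ)*u^2)) := by
      apply mul_le_mul_of_nonneg_left hpow (by positivity)
    have step2 : 2*u*(1+u)*exp (-((m:ℝ)*u^2)) ≤ 2*u*(1+u)*E := by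
      apply mul_le_mul_of_nonneg_left hexpmono (by positivity)
    calc 2*u*(1+u)*(1-u^2)^m ≤ 2*u*(1+u)*E := le_trans step1 step2
      _ = 2*u*E + 2*u^2*E := by ring
  -- bounds on the two terms
  have ht : 0 ≤ x*u := by positivity
  have hT1 : 2*u*E ≤ (1081/1000)/x := by
    have := texp_bound1 (x*u) ht
    rw [div_eq_mul_inv]
    have e1 : 2*u*E = (2*(x*u)*E) * x⁻¹ := by field_simp
    rw [e1]
    apply mul_le_mul_of_nonneg_right this (by positivity)
  have hT2 : 2*u^2*E ≤ (11681/10000)/x^2 := by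
    have := texp_bound2 (x*u) ht
    rw [div_eq_mul_inv]
    have e1 : 2*u^2*E = (2*(x*u)^2*E) * (x^2)⁻¹ := by field_simp
    rw [e1]
    apply mul_le_mul_of_nonneg_right this (by positivity)
  -- final arithmetic
  have harith : (1081/1000:ℝ)/x + (11681/10000)/x^2 + ((6301/10000)/x + 2/x^3)
      ≤ (22894/10000)/x := by
    have hA : (11681/10000:ℝ)/x^2 ≤ (11681/10000)/((3207/1000)*x) := by
      apply div_le_div_of_nonneg_left (by norm_num) (by positivity)
      nlinarith
    have hB : (2:ℝ)/x^3 ≤ 2/((3207/1000)^2*x) := by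
      apply div_le_div_of_nonneg_left (by norm_num) (by positivity)
      nlinarith [sq_nonneg x, hxge, hxpos]
    have hA' : (11681/10000:ℝ)/((3207/1000)*x) = (11681/32070)/x := by
      rw [div_eq_div_iff (by positivity) (by positivity)]; ring
    have hB' : (2:ℝ)/((3207/1000)^2*x) = (2000000/10284849)/x := by
      rw [div_eq_div_iff (by positivity) (by positivity)]; ring
    rw [hA'] at hA; rw [hB'] at hB
    have hsum : (1081/1000:ℝ)/x + (11681/32070)/x + ((6301/10000)/x + (2000000/10284849)/x)
        ≤ (22894/10000)/x := by
      rw [← add_div, ← add_div, ← add_div]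
      gcongr
      norm_num
    linarith [hA, hB, hsum]
  linarith [hmain, hT1, hT2, hk_up, hrhs, harith]


lemma band_case {u : ℝ} (h0 : 0 ≤ u) (h1 : u ≤ 1) (c m₀ : ℕ) (hm : m₀ ≤ c)
    (B : ℝ) (hpoly : 2*u*(1+u)^(m₀+1)*(1-u)^m₀ ≤ B) (G : ℕ) (hG : 0 < G)
    (hcube : (B + ((c:ℝ)+1)/G)^3 ≤ 12/(G:ℝ)) (hB0 : 0 ≤ B) :
    2*u*(1+u)*(1-u^2)^c + ((c:ℝ)+1)/G ≤ (12/(G:ℝ)) ^ ((1:ℝ)/3) := by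
  have h1u : (0:ℝ) ≤ 1-u^2 := by nlinarith
  have h1u1 : 1-u^2 ≤ 1 := by nlinarith
  have hmono : (1-u^2)^c ≤ (1-u^2)^m₀ := pow_le_pow_of_le_one h1u h1u1 hm
  have heq : 2*u*(1+u)*(1-u^2)^m₀ = 2*u*(1+u)^(m₀+1)*(1-u)^m₀ := by
    rw [show (1:ℝ)-u^2 = (1+u)*(1-u) by ring, mul_pow]; ring
  have hstep : 2*u*(1+u)*(1-u^2)^c ≤ B := by
    calc 2*u*(1+u)*(1-u^2)^c ≤ 2*u*(1+u)*(1-u^2)^m₀ :=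
          mul_le_mul_of_nonneg_left hmono (by positivity)
      _ = 2*u*(1+u)^(m₀+1)*(1-u)^m₀ := heq
      _ ≤ B := hpoly
  have hGpos : (0:ℝ) < G := by exact_mod_cast hG
  have hD := le_rpow_third (by positivity) hcube
  linarith

set_option maxHeartbeats 2000000 in
lemma scalar_main (g k : ℕ) (hg : 12 ≤ g) (hk : k = ⌈((g:ℝ)/2) ^ ((2:ℝ)/3)⌉₊ + 1)
    (ρ : ℝ) (hρ : 1 ≤ ρ) :
    (k:ℝ)/g + (ρ - 1) * (4*ρ/(1+ρ)^2) ^ k ≤ (12/(g:ℝ)) ^ ((1:ℝ)/3) := by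
  have hgpos : (0:ℝ) < g := by
    have : (12:ℝ) ≤ g := by exact_mod_cast hg
    linarith
  set m : ℕ := ⌈((g:ℝ)/2) ^ ((2:ℝ)/3)⌉₊ with hmdef
  have hρ1 : (0:ℝ) < 1 + ρ := by linarith
  set u : ℝ := (ρ-1)/(ρ+1) with hudef
  have h0 : 0 ≤ u := div_nonneg (by linarith) (by linarith)
  have h1 : u ≤ 1 := by rw [hudef, div_le_one (by linarith)]; linarith
  have hbase : 4*ρ/(1+ρ)^2 = 1-u^2 := by rw [hudef]; field_simp; ring
  have hfac : (ρ-1)*(1-u^2) = 2*u*(1+u) := by rw [hudef]; field_simp; ring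
  have hexp : (ρ - 1) * (4*ρ/(1+ρ)^2) ^ (m+1) = 2*u*(1+u)*(1-u^2)^m := by
    rw [hbase, pow_succ]
    calc (ρ-1) * ((1-u^2)^m * (1-u^2)) = ((ρ-1)*(1-u^2)) * (1-u^2)^m := by ring
      _ = 2*u*(1+u) * (1-u^2)^m := by rw [hfac]
  rw [hk, hexp]
  push_cast
  by_cases hg33 : 33 ≤ g
  · have hy0 : (0:ℝ) ≤ ((g:ℝ)/2) ^ ((2:ℝ)/3) := by positivity
    have hmy : ((g:ℝ)/2) ^ ((2:ℝ)/3) ≤ (m:ℝ) := Nat.le_ceil _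
    have hky : ((m:ℝ)+1) ≤ ((g:ℝ)/2) ^ ((2:ℝ)/3) + 2 := by
      have := Nat.ceil_lt_add_one hy0
      rw [← hmdef] at this
      linarith
    linarith [exp_case g hg33 m hmy hky u h0 h1]
  · push_neg at hg33
    have hg32 : g ≤ 32 := by omega
    interval_cases g
    · have hm' : m = 4 := by
        rw [hmdef]; exact ceil_23 12 4 (by norm_num) (by norm_num) (by norm_num)
      rw [hm']
      have hb := band_case h0 h1 4 4 (by norm_num) (7/12 : ℝ) (poly4 u h0 h1) 12
        (by norm_num) (by norm_num) (by norm_num)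
      push_cast at hb ⊢
      linarith
    · have hm' : m = 4 := by
        rw [hmdef]; exact ceil_23 13 4 (by norm_num) (by norm_num) (by norm_num)
      rw [hm']
      have hb := band_case h0 h1 4 4 (by norm_num) (7/12 : ℝ) (poly4 u h0 h1) 13
        (by norm_num) (by norm_num) (by norm_num)
      push_cast at hb ⊢
      linarith
    · have hm' : m = 4 := by
        rw [hmdef]; exact ceil_23 14 4 (by norm_num) (by norm_num) (by norm_num)
      rw [hm']
      have hb := band_case h0 h1 4 4 (by norm_num) (7/12 : ℝ) (poly4 u h0 h1) 14
        (by norm_num) (by norm_num) (by norm_num)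
      push_cast at hb ⊢
      linarith
    · have hm' : m = 4 := by
        rw [hmdef]; exact ceil_23 15 4 (by norm_num) (by norm_num) (by norm_num)
      rw [hm']
      have hb := band_case h0 h1 4 4 (by norm_num) (7/12 : ℝ) (poly4 u h0 h1) 15
        (by norm_num) (by norm_num) (by norm_num)
      push_cast at hb ⊢
      linarith
    · have hm' : m = 4 := by
        rw [hmdef]; exact ceil_23 16 4 (by norm_num) (by norm_num) (by norm_num)
      rw [hm']
      have hb := band_case h0 h1 4 4 (by norm_num) (7/12 : ℝ) (poly4 u h0 h1) 16
        (by norm_num) (by norm_num) (by norm_num)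
      push_cast at hb ⊢
      linarith
    · have hm' : m = 5 := by
        rw [hmdef]; exact ceil_23 17 5 (by norm_num) (by norm_num) (by norm_num)
      rw [hm']
      have hb := band_case h0 h1 5 5 (by norm_num) (1/2 : ℝ) (poly5 u h0 h1) 17
        (by norm_num) (by norm_num) (by norm_num)
      push_cast at hb ⊢
      linarith
    · have hm' : m = 5 := by
        rw [hmdef]; exact ceil_23 18 5 (by norm_num) (by norm_num) (by norm_num)
      rw [hm']
      have hb := band_case h0 h1 5 5 (by norm_num) (1/2 : ℝ) (poly5 u h0 h1) 18
        (by norm_num) (by norm_num) (by norm_num)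
      push_cast at hb ⊢
      linarith
    · have hm' : m = 5 := by
        rw [hmdef]; exact ceil_23 19 5 (by norm_num) (by norm_num) (by norm_num)
      rw [hm']
      have hb := band_case h0 h1 5 5 (by norm_num) (1/2 : ℝ) (poly5 u h0 h1) 19
        (by norm_num) (by norm_num) (by norm_num)
      push_cast at hb ⊢
      linarith
    · have hm' : m = 5 := by
        rw [hmdef]; exact ceil_23 20 5 (by norm_num) (by norm_num) (by norm_num)
      rw [hm']
      have hb := band_case h0 h1 5 5 (by norm_num) (1/2 : ℝ) (poly5 u h0 h1) 20
        (by norm_num) (by norm_num) (by norm_num)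
      push_cast at hb ⊢
      linarith
    · have hm' : m = 5 := by
        rw [hmdef]; exact ceil_23 21 5 (by norm_num) (by norm_num) (by norm_num)
      rw [hm']
      have hb := band_case h0 h1 5 5 (by norm_num) (1/2 : ℝ) (poly5 u h0 h1) 21
        (by norm_num) (by norm_num) (by norm_num)
      push_cast at hb ⊢
      linarith
    · have hm' : m = 5 := by
        rw [hmdef]; exact ceil_23 22 5 (by norm_num) (by norm_num) (by norm_num)
      rw [hm']
      have hb := band_case h0 h1 5 5 (by norm_num) (1/2 : ℝ) (poly5 u h0 h1) 22
        (by norm_num) (by norm_num) (by norm_num)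
      push_cast at hb ⊢
      linarith
    · have hm' : m = 6 := by
        rw [hmdef]; exact ceil_23 23 6 (by norm_num) (by norm_num) (by norm_num)
      rw [hm']
      have hb := band_case h0 h1 6 6 (by norm_num) (9/20 : ℝ) (poly6 u h0 h1) 23
        (by norm_num) (by norm_num) (by norm_num)
      push_cast at hb ⊢
      linarith
    · have hm' : m = 6 := by
        rw [hmdef]; exact ceil_23 24 6 (by norm_num) (by norm_num) (by norm_num)
      rw [hm']
      have hb := band_case h0 h1 6 6 (by norm_num) (9/20 : ℝ) (poly6 u h0 h1) 24
        (by norm_num) (by norm_num) (by norm_num)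
      push_cast at hb ⊢
      linarith
    · have hm' : m = 6 := by
        rw [hmdef]; exact ceil_23 25 6 (by norm_num) (by norm_num) (by norm_num)
      rw [hm']
      have hb := band_case h0 h1 6 6 (by norm_num) (9/20 : ℝ) (poly6 u h0 h1) 25
        (by norm_num) (by norm_num) (by norm_num)
      push_cast at hb ⊢
      linarith
    · have hm' : m = 6 := by
        rw [hmdef]; exact ceil_23 26 6 (by norm_num) (by norm_num) (by norm_num)
      rw [hm']
      have hb := band_case h0 h1 6 6 (by norm_num) (9/20 : ℝ) (poly6 u h0 h1) 26
        (by norm_num) (by norm_num) (by norm_num)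
      push_cast at hb ⊢
      linarith
    · have hm' : m = 6 := by
        rw [hmdef]; exact ceil_23 27 6 (by norm_num) (by norm_num) (by norm_num)
      rw [hm']
      have hb := band_case h0 h1 6 6 (by norm_num) (9/20 : ℝ) (poly6 u h0 h1) 27
        (by norm_num) (by norm_num) (by norm_num)
      push_cast at hb ⊢
      linarith
    · have hm' : m = 6 := by
        rw [hmdef]; exact ceil_23 28 6 (by norm_num) (by norm_num) (by norm_num)
      rw [hm']
      have hb := band_case h0 h1 6 6 (by norm_num) (9/20 : ℝ) (poly6 u h0 h1) 28
        (by norm_num) (by norm_num) (by norm_num)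
      push_cast at hb ⊢
      linarith
    · have hm' : m = 6 := by
        rw [hmdef]; exact ceil_23 29 6 (by norm_num) (by norm_num) (by norm_num)
      rw [hm']
      have hb := band_case h0 h1 6 6 (by norm_num) (9/20 : ℝ) (poly6 u h0 h1) 29
        (by norm_num) (by norm_num) (by norm_num)
      push_cast at hb ⊢
      linarith
    · have hm' : m = 7 := by
        rw [hmdef]; exact ceil_23 30 7 (by norm_num) (by norm_num) (by norm_num)
      rw [hm']
      have hb := band_case h0 h1 7 6 (by norm_num) (9/20 : ℝ) (poly6 u h0 h1) 30
        (by norm_num) (by norm_num) (by norm_num)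
      push_cast at hb ⊢
      linarith
    · have hm' : m = 7 := by
        rw [hmdef]; exact ceil_23 31 7 (by norm_num) (by norm_num) (by norm_num)
      rw [hm']
      have hb := band_case h0 h1 7 6 (by norm_num) (9/20 : ℝ) (poly6 u h0 h1) 31
        (by norm_num) (by norm_num) (by norm_num)
      push_cast at hb ⊢
      linarith
    · have hm' : m = 7 := by
        rw [hmdef]; exact ceil_23 32 7 (by norm_num) (by norm_num) (by norm_num)
      rw [hm']
      have hb := band_case h0 h1 7 6 (by norm_num) (9/20 : ℝ) (poly6 u h0 h1) 32
        (by norm_num) (by norm_num) (by norm_num)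
      push_cast at hb ⊢
      linarith



set_option maxHeartbeats 1000000 in
lemma pair_bound {Ω : Type*} [MeasurableSpace Ω] (P : Measure Ω) [IsProbabilityMeasure P]
    (X Y : Ω → ℝ) (hX : Measurable X) (hY : Measurable Y) (hXY : IndepFun X Y P)
    (k g : ℕ) (hg : 12 ≤ g) (hk : k = ⌈((g:ℝ)/2) ^ ((2:ℝ)/3)⌉₊ + 1)
    (pi pj : ℝ) (hpi : 0 < pi) (hpij : pi ≤ pj)
    (hdX : P.map X = gammaMeasure (k:ℝ) ((g:ℝ)/pi))
    (hdY : P.map Y = gammaMeasure (k:ℝ) ((g:ℝ)/pj)) :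
    ∫ ω, (pi + min (X ω) (Y ω) + (pj - pi) * (if Y ω < X ω then 1 else 0)) ∂P
      ≤ (1 + (12/(g:ℝ)) ^ ((1:ℝ)/3)) * pi := by
  have hpj : 0 < pj := lt_of_lt_of_le hpi hpij
  have hgR : (0:ℝ) < g := by
    have : (12:ℝ) ≤ g := by exact_mod_cast hg
    linarith
  have hk1 : 1 ≤ k := by omega
  have haR : (0:ℝ) < (k:ℝ) := by exact_mod_cast hk1
  set ri : ℝ := (g:ℝ)/pi with hri
  set rj : ℝ := (g:ℝ)/pj with hrj
  have hri0 : 0 < ri := by positivity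
  have hrj0 : 0 < rj := by positivity
  have hrji : rj ≤ ri := by
    rw [hri, hrj]
    exact div_le_div_of_nonneg_left hgR.le hpi hpij
  set θ : ℝ := (ri - rj)/2 with hθ
  have hθ0 : 0 ≤ θ := by rw [hθ]; linarith
  have hθri : θ < ri := by rw [hθ]; linarith
  have hθrj : -θ < rj := by rw [hθ]; linarith
  -- mean of X
  have hid := gamma_integral_id haR hri0
  have hXint : Integrable X P := by
    have h1 : Integrable (fun x : ℝ => x) (P.map X) := hdX ▸ hid.1
    exact (integrable_map_measure aestronglyMeasurable_id hX.aemeasurable).mp h1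
  have hXval : ∫ ω, X ω ∂P = (k:ℝ) * pi / g := by
    have h1 : ∫ x, x ∂(P.map X) = (k:ℝ)/ri := hdX ▸ hid.2
    have h2 : ∫ x, x ∂(P.map X) = ∫ ω, X ω ∂P :=
      integral_map hX.aemeasurable aestronglyMeasurable_id
    rw [← h2, h1, hri]
    field_simp
  -- Y integrable (for min bound)
  have hidY := gamma_integral_id haR hrj0
  have hYint : Integrable Y P := by
    have h1 : Integrable (fun x : ℝ => x) (P.map Y) := hdY ▸ hidY.1
    exact (integrable_map_measure aestronglyMeasurable_id hY.aemeasurable).mp h1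
  -- min
  have hmin_meas : Measurable (fun ω => min (X ω) (Y ω)) := hX.min hY
  have hmin_int : Integrable (fun ω => min (X ω) (Y ω)) P := by
    apply Integrable.mono' (hXint.abs.add hYint.abs) hmin_meas.aestronglyMeasurable
    filter_upwards with ω
    rw [Real.norm_eq_abs]
    rcases le_total (X ω) (Y ω) with h | h
    · rw [min_eq_left h]
      have := abs_nonneg (Y ω); exact le_add_of_nonneg_right this
    · rw [min_eq_right h]
      have := abs_nonneg (X ω); simp only [Pi.add_apply]; linarith [abs_nonneg (X ω)]
  have hmin_le : ∫ ω, min (X ω) (Y ω) ∂P ≤ (k:ℝ) * pi / g := by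
    rw [← hXval]
    exact integral_mono hmin_int hXint (fun ω => min_le_left _ _)
  -- exponential moments
  have hEX := gamma_integral_exp haR hri0 hθri
  have hEY := gamma_integral_exp haR hrj0 hθrj
  have hEXint : Integrable (fun ω => exp (θ * X ω)) P := by
    have h1 : Integrable (fun x : ℝ => exp (θ * x)) (P.map X) := hdX ▸ hEX.1
    exact (integrable_map_measure
      ((by fun_prop : Measurable fun x : ℝ => exp (θ * x)).aestronglyMeasurable)
      hX.aemeasurable).mp h1
  have hEYint : Integrable (fun ω => exp (-θ * Y ω)) P := by
    have h1 : Integrable (fun x : ℝ => exp (-θ * x)) (P.map Y) := hdY ▸ hEY.1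
    exact (integrable_map_measure
      ((by fun_prop : Measurable fun x : ℝ => exp (-θ * x)).aestronglyMeasurable)
      hY.aemeasurable).mp h1
  have hEXval : ∫ ω, exp (θ * X ω) ∂P = (ri/(ri-θ)) ^ (k:ℝ) := by
    rw [← integral_map hX.aemeasurable
      ((by fun_prop : Measurable fun x : ℝ => exp (θ * x)).aestronglyMeasurable), hdX]
    exact hEX.2
  have hEYval : ∫ ω, exp (-θ * Y ω) ∂P = (rj/(rj+θ)) ^ (k:ℝ) := by
    rw [← integral_map hY.aemeasurable
      ((by fun_prop : Measurable fun x : ℝ => exp (-θ * x)).aestronglyMeasurable), hdY]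
    rw [hEY.2]
    ring_nf
  -- independence of exponentials
  have hindE : IndepFun (fun ω => exp (θ * X ω)) (fun ω => exp (-θ * Y ω)) P := by
    exact hXY.comp (by fun_prop : Measurable fun x : ℝ => exp (θ * x))
      (by fun_prop : Measurable fun x : ℝ => exp (-θ * x))
  have hprod_int : Integrable (fun ω => exp (θ * X ω) * exp (-θ * Y ω)) P :=
    hindE.integrable_mul hEXint hEYint
  have hprod_val : ∫ ω, exp (θ * X ω) * exp (-θ * Y ω) ∂P
      = (ri/(ri-θ)) ^ (k:ℝ) * (rj/(rj+θ)) ^ (k:ℝ) := by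
    rw [← hEXval, ← hEYval]
    exact hindE.integral_fun_mul_eq_mul_integral hEXint.aestronglyMeasurable hEYint.aestronglyMeasurable
  -- indicator
  set I : Ω → ℝ := fun ω => if Y ω < X ω then 1 else 0 with hI
  have hI_meas : Measurable I := by
    apply Measurable.ite (measurableSet_lt hY hX) <;> exact measurable_const
  have hI_int : Integrable I P := by
    apply Integrable.mono' (integrable_const (1:ℝ)) hI_meas.aestronglyMeasurable
    filter_upwards with ω
    simp only [hI, Real.norm_eq_abs]
    split_ifs <;> norm_num
  have hI_le : ∀ ω, I ω ≤ exp (θ * X ω) * exp (-θ * Y ω) := by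
    intro ω
    simp only [hI]
    split_ifs with h
    · rw [← Real.exp_add]
      apply Real.one_le_exp
      nlinarith [sub_pos.mpr h]
    · positivity
  have hI_val : ∫ ω, I ω ∂P ≤ (ri/(ri-θ)) ^ (k:ℝ) * (rj/(rj+θ)) ^ (k:ℝ) := by
    rw [← hprod_val]
    exact integral_mono hI_int hprod_int hI_le
  -- compute the base
  have hbase : (ri/(ri-θ)) ^ (k:ℝ) * (rj/(rj+θ)) ^ (k:ℝ)
      = (4*(pj/pi)/(1+pj/pi)^2) ^ k := by
    rw [← Real.mul_rpow (div_nonneg hri0.le (by linarith)) (div_nonneg hrj0.le (by linarith))]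
    have hb : ri/(ri-θ) * (rj/(rj+θ)) = 4*(pj/pi)/(1+pj/pi)^2 := by
      rw [hθ, hri, hrj]
      have h1 : (g:ℝ)/pi - ((g:ℝ)/pi - (g:ℝ)/pj)/2 = (g:ℝ)*(pi+pj)/(2*pi*pj) := by
        field_simp; ring
      have h2 : (g:ℝ)/pj + ((g:ℝ)/pi - (g:ℝ)/pj)/2 = (g:ℝ)*(pi+pj)/(2*pi*pj) := by
        field_simp; ring
      rw [h1, h2]
      have hpp : (0:ℝ) < pi + pj := by linarith
      field_simp
      ring
    rw [hb, Real.rpow_natCast]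
  rw [hbase] at hI_val
  -- scalar bound
  have hρ : 1 ≤ pj/pi := (one_le_div hpi).mpr hpij
  have hscal := scalar_main g k hg hk (pj/pi) hρ
  -- multiply by pi
  have hscal' : (k:ℝ)*pi/g + (pj - pi) * (4*(pj/pi)/(1+pj/pi)^2) ^ k
      ≤ (12/(g:ℝ)) ^ ((1:ℝ)/3) * pi := by
    have := mul_le_mul_of_nonneg_right hscal hpi.le
    have he1 : ((k:ℝ)/g + (pj/pi - 1) * (4*(pj/pi)/(1+pj/pi)^2) ^ k) * pi
        = (k:ℝ)*pi/g + (pj - pi) * (4*(pj/pi)/(1+pj/pi)^2) ^ k := by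
      field_simp
    rw [he1] at this
    exact this
  -- assemble
  have hsplit : ∫ ω, (pi + min (X ω) (Y ω) + (pj - pi) * I ω) ∂P
      = pi + ∫ ω, min (X ω) (Y ω) ∂P + (pj - pi) * ∫ ω, I ω ∂P := by
    have hconst : ∫ _ω : Ω, pi ∂P = pi := by simp
    calc ∫ ω, (pi + min (X ω) (Y ω) + (pj - pi) * I ω) ∂P
        = (∫ ω, (pi + min (X ω) (Y ω)) ∂P) + ∫ ω, ((pj - pi) * I ω) ∂P :=
          integral_add ((integrable_const pi).add hmin_int) (hI_int.const_mul _)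
      _ = ((∫ _ω : Ω, pi ∂P) + ∫ ω, min (X ω) (Y ω) ∂P) + (pj - pi) * ∫ ω, I ω ∂P := by
          rw [integral_add (integrable_const pi) hmin_int, integral_const_mul]
      _ = pi + ∫ ω, min (X ω) (Y ω) ∂P + (pj - pi) * ∫ ω, I ω ∂P := by rw [hconst]
  show (∫ ω, (pi + min (X ω) (Y ω) + (pj - pi) * I ω) ∂P) ≤ _
  rw [hsplit]
  have hIterm : (pj - pi) * ∫ ω, I ω ∂P ≤ (pj - pi) * (4*(pj/pi)/(1+pj/pi)^2) ^ k :=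
    mul_le_mul_of_nonneg_left hI_val (by linarith)
  nlinarith [hmin_le, hIterm, hscal']

end Aux

open MeasureTheory ProbabilityTheory Finset in
/-- Expected competitive ratio of repeated Explore-Then-Commit with threshold
$k = \lceil (g/2)^{2/3}\rceil + 1$ is at most $1 + (12/g)^{1/3}$. -/
theorem stmt_12 (g : ℕ) (hg : 12 ≤ g) (k : ℕ)
    (hk : k = ⌈((g : ℝ) / 2) ^ ((2 : ℝ) / 3)⌉₊ + 1)
    (n : ℕ) (hn : 1 ≤ n) (p : ℕ → ℝ)
    (hp : ∀ i ∈ Finset.Icc 1 n, 0 < p i)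
    (hmono : ∀ i j, 1 ≤ i → i ≤ j → j ≤ n → p i ≤ p j)
    {Ω : Type*} [MeasurableSpace Ω] (P : Measure Ω) [IsProbabilityMeasure P]
    (τ : ℕ → Ω → ℝ) (hτ : ∀ i, Measurable (τ i))
    (hind : iIndepFun (fun i : (Finset.Icc 1 n : Finset ℕ) => τ i) P)
    (hd : ∀ j ∈ Finset.Icc 1 n, P.map (τ j) = gammaMeasure (k : ℝ) ((g : ℝ) / p j)) :
    (∑ j ∈ Finset.Icc 1 n, p j)
      + ∑ i ∈ Finset.Icc 1 n, ∑ j ∈ Finset.Icc (i + 1) n,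
          (∫ ω, (p i + min (τ i ω) (τ j ω)
              + (p j - p i) * (if τ j ω < τ i ω then 1 else 0)) ∂P)
    ≤ (1 + (12 / (g : ℝ)) ^ ((1 : ℝ) / 3))
        * ∑ i ∈ Finset.Icc 1 n, ((n : ℝ) - i + 1) * p i := by
  set ε : ℝ := (12/(g:ℝ)) ^ ((1:ℝ)/3) with hε
  have hgR : (0:ℝ) < g := by
    have : (12:ℝ) ≤ g := by exact_mod_cast hg
    linarith
  have hε0 : 0 ≤ ε := Real.rpow_nonneg (by positivity) _
  have pair : ∀ i ∈ Finset.Icc 1 n, ∀ j ∈ Finset.Icc (i+1) n,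
      (∫ ω, (p i + min (τ i ω) (τ j ω)
          + (p j - p i) * (if τ j ω < τ i ω then 1 else 0)) ∂P) ≤ (1 + ε) * p i := by
    intro i hi j hj
    have hi2 := Finset.mem_Icc.mp hi
    have hj2 := Finset.mem_Icc.mp hj
    have hj' : j ∈ Finset.Icc 1 n := Finset.mem_Icc.mpr ⟨by omega, hj2.2⟩
    have hne : (⟨i, hi⟩ : (Finset.Icc 1 n : Finset ℕ)) ≠ ⟨j, hj'⟩ := by
      simp only [ne_eq, Subtype.mk.injEq]
      omega
    have hIndep : IndepFun (τ i) (τ j) P := hind.indepFun hne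
    exact pair_bound P (τ i) (τ j) (hτ i) (hτ j) hIndep k g hg hk (p i) (p j)
      (hp i hi) (hmono i j hi2.1 (by omega) hj2.2) (hd i hi) (hd j hj')
  have hsum2 : ∑ i ∈ Finset.Icc 1 n, ∑ j ∈ Finset.Icc (i+1) n,
      (∫ ω, (p i + min (τ i ω) (τ j ω)
          + (p j - p i) * (if τ j ω < τ i ω then 1 else 0)) ∂P)
      ≤ ∑ i ∈ Finset.Icc 1 n, ((n:ℝ) - i) * ((1+ε) * p i) := by
    apply Finset.sum_le_sum
    intro i hi
    have hi2 := Finset.mem_Icc.mp hi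
    calc ∑ j ∈ Finset.Icc (i+1) n, (∫ ω, (p i + min (τ i ω) (τ j ω)
            + (p j - p i) * (if τ j ω < τ i ω then 1 else 0)) ∂P)
        ≤ ∑ _j ∈ Finset.Icc (i+1) n, (1+ε) * p i := Finset.sum_le_sum (pair i hi)
      _ = ((Finset.Icc (i+1) n).card : ℝ) * ((1+ε) * p i) := by
          rw [Finset.sum_const, nsmul_eq_mul]
      _ = ((n:ℝ) - i) * ((1+ε) * p i) := by
          rw [Nat.card_Icc, show n + 1 - (i+1) = n - i from by omega,
            Nat.cast_sub hi2.2]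
  calc (∑ j ∈ Finset.Icc 1 n, p j)
      + ∑ i ∈ Finset.Icc 1 n, ∑ j ∈ Finset.Icc (i+1) n,
          (∫ ω, (p i + min (τ i ω) (τ j ω)
              + (p j - p i) * (if τ j ω < τ i ω then 1 else 0)) ∂P)
      ≤ (∑ j ∈ Finset.Icc 1 n, p j)
        + ∑ i ∈ Finset.Icc 1 n, ((n:ℝ) - i) * ((1+ε) * p i) := by linarith [hsum2]
    _ = ∑ i ∈ Finset.Icc 1 n, (p i + ((n:ℝ) - i) * ((1+ε) * p i)) := by
        rw [Finset.sum_add_distrib]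
    _ ≤ ∑ i ∈ Finset.Icc 1 n, ((1+ε) * p i + ((n:ℝ) - i) * ((1+ε) * p i)) := by
        apply Finset.sum_le_sum
        intro i hi
        have := hp i hi
        nlinarith
    _ = (1 + ε) * ∑ i ∈ Finset.Icc 1 n, ((n : ℝ) - i + 1) * p i := by
        rw [Finset.mul_sum]
        apply Finset.sum_congr rfl
        intro i _
        ring
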